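/- Let f be a smooth real function and let u(t,x) be a smooth real-valued solution of the gKN equation with f, such that u_x(t,x) ≠ 0 for all (t,x). Define the conserved density T₁(t,x) = (1/2)·u_xx²/u_x² + (1/3)·f(u)/u_x² and flux X₁(t,x) = −u_xxxx·u_xx/u_x² + (1/2)·u_xxx²/u_x² + (2/3)·u_xxx·(3u_xx² + f(u))/u_x³ − (9/8)·u_xx⁴/u_x⁴ + (1/2)·u_xx²·f(u)/u_x⁴ − u_xx·f'(u)/u_x² + (1/6)·f(u)²/u_x⁴. Assume that for every t: the function x ↦ T₁(t,x) is integrable on ℝ; the map E₁(t) := ∫_ℝ T₁(t,x) dx is differentiable with E₁'(t) = ∫_ℝ ∂_t T₁(t,x) dx; the function x ↦ ∂_x X₁(t,x) is integrable on ℝ; and X₁(t,x) → 0 as x → +∞ and as x → −∞. Then E₁'(t) = 0 for every t, i.e., the Hamiltonian energy E₁ = ∫_ℝ T₁ dx is a constant of the motion. -/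

import Mathlib

open Real

/-- Partial derivative with respect to the second (spatial) variable. -/
noncomputable def pdx (u : ℝ → ℝ → ℝ) : ℝ → ℝ → ℝ := fun t x => deriv (fun y => u t y) x

/-- Partial derivative with respect to the first (time) variable. -/
noncomputable def pdt (u : ℝ → ℝ → ℝ) : ℝ → ℝ → ℝ := fun t x => deriv (fun s => u s x) t

/-- `u` solves the generalized Krichever-Novikov equation with nonlinearity `f`:
`u_t = u_xxx - (3/2) u_xx^2/u_x + f(u)/u_x`. -/
def isGKN (f : ℝ → ℝ) (u : ℝ → ℝ → ℝ) : Prop :=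
  ∀ t x, pdt u t x =
    pdx (pdx (pdx u)) t x - (3/2) * (pdx (pdx u) t x)^2 / pdx u t x + f (u t x) / pdx u t x

/-- The conserved density `T₁ = (1/2) u_xx²/u_x² + (1/3) f(u)/u_x²`. -/
noncomputable def T1 (f : ℝ → ℝ) (u : ℝ → ℝ → ℝ) : ℝ → ℝ → ℝ := fun t x =>
  (1/2) * (pdx (pdx u) t x)^2 / (pdx u t x)^2 + (1/3) * f (u t x) / (pdx u t x)^2

/-- The flux `X₁` corresponding to `T₁`. -/
noncomputable def X1 (f : ℝ → ℝ) (u : ℝ → ℝ → ℝ) : ℝ → ℝ → ℝ := fun t x =>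
  -((pdx (pdx (pdx (pdx u))) t x) * (pdx (pdx u) t x) / (pdx u t x)^2) + (1/2) * (pdx (pdx (pdx u)) t x)^2 / (pdx u t x)^2
    + (2/3) * (pdx (pdx (pdx u)) t x) * (3 * (pdx (pdx u) t x)^2 + f (u t x)) / (pdx u t x)^3
    - (9/8) * (pdx (pdx u) t x)^4 / (pdx u t x)^4 + (1/2) * (pdx (pdx u) t x)^2 * (f (u t x)) / (pdx u t x)^4
    - (pdx (pdx u) t x) * (deriv f (u t x)) / (pdx u t x)^2 + (1/6) * (f (u t x))^2 / (pdx u t x)^4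

open MeasureTheory Filter Function

section Helpers

lemma gkn_hda_congr {g : ℝ → ℝ} {a b x : ℝ} (h : HasDerivAt g a x) (e : a = b) :
    HasDerivAt g b x := e ▸ h

lemma gkn_hdx {w : ℝ → ℝ → ℝ} (hw : ContDiff ℝ (⊤:ℕ∞) (uncurry w)) (t x : ℝ) :
    HasDerivAt (fun y => w t y) (pdx w t x) x := by
  have h : DifferentiableAt ℝ (fun y => w t y) x :=
    ((hw.differentiable (lt_of_lt_of_le zero_lt_one (by exact_mod_cast le_top : (1:WithTop ℕ∞) ≤ ((⊤:ℕ∞):WithTop ℕ∞))).ne').comp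
      ((differentiable_const t).prodMk differentiable_id)).differentiableAt
  exact h.hasDerivAt

lemma gkn_hdt {w : ℝ → ℝ → ℝ} (hw : ContDiff ℝ (⊤:ℕ∞) (uncurry w)) (t x : ℝ) :
    HasDerivAt (fun s => w s x) (pdt w t x) t := by
  have h : DifferentiableAt ℝ (fun s => w s x) t :=
    ((hw.differentiable (lt_of_lt_of_le zero_lt_one (by exact_mod_cast le_top : (1:WithTop ℕ∞) ≤ ((⊤:ℕ∞):WithTop ℕ∞))).ne').comp
      (differentiable_id.prodMk (differentiable_const x))).differentiableAt
  exact h.hasDerivAt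

lemma gkn_pdx_eq_fderiv {w : ℝ → ℝ → ℝ} (hw : ContDiff ℝ (⊤:ℕ∞) (uncurry w)) (t x : ℝ) :
    pdx w t x = fderiv ℝ (uncurry w) (t, x) (0, 1) := by
  have h1 : HasFDerivAt (uncurry w) (fderiv ℝ (uncurry w) (t,x)) (t,x) :=
    (hw.differentiable (lt_of_lt_of_le zero_lt_one (by exact_mod_cast le_top : (1:WithTop ℕ∞) ≤ ((⊤:ℕ∞):WithTop ℕ∞))).ne' (t,x)).hasFDerivAt
  have h2 : HasDerivAt (fun y => ((t:ℝ), y)) ((0:ℝ), (1:ℝ)) x :=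
    (hasDerivAt_const x t).prodMk (hasDerivAt_id x)
  exact (h1.comp_hasDerivAt x h2).deriv

lemma gkn_pdt_eq_fderiv {w : ℝ → ℝ → ℝ} (hw : ContDiff ℝ (⊤:ℕ∞) (uncurry w)) (t x : ℝ) :
    pdt w t x = fderiv ℝ (uncurry w) (t, x) (1, 0) := by
  have h1 : HasFDerivAt (uncurry w) (fderiv ℝ (uncurry w) (t,x)) (t,x) :=
    (hw.differentiable (lt_of_lt_of_le zero_lt_one (by exact_mod_cast le_top : (1:WithTop ℕ∞) ≤ ((⊤:ℕ∞):WithTop ℕ∞))).ne' (t,x)).hasFDerivAt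
  exact (h1.comp_hasDerivAt t ((hasDerivAt_id t).prodMk (hasDerivAt_const t x))).deriv

lemma gkn_contDiff_pdx {w : ℝ → ℝ → ℝ} (hw : ContDiff ℝ (⊤:ℕ∞) (uncurry w)) :
    ContDiff ℝ (⊤:ℕ∞) (uncurry (pdx w)) := by
  have h : ContDiff ℝ (⊤:ℕ∞) (fun p : ℝ × ℝ => fderiv ℝ (uncurry w) p (0,1)) :=
    (hw.fderiv_right (m := ((⊤:ℕ∞):WithTop ℕ∞)) (by exact_mod_cast le_top)).clm_apply contDiff_const
  have he : uncurry (pdx w) = fun p : ℝ × ℝ => fderiv ℝ (uncurry w) p (0,1) := by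
    ext p; exact gkn_pdx_eq_fderiv hw p.1 p.2
  rw [he]; exact h

lemma gkn_pdt_pdx_comm {w : ℝ → ℝ → ℝ} (hw : ContDiff ℝ (⊤:ℕ∞) (uncurry w)) (t x : ℝ) :
    pdt (pdx w) t x = pdx (pdt w) t x := by
  have h1le : (1:WithTop ℕ∞) ≤ ((⊤:ℕ∞):WithTop ℕ∞) := by exact_mod_cast le_top
  set U := uncurry w with hU
  set F' : ℝ × ℝ → (ℝ × ℝ) →L[ℝ] ℝ := fderiv ℝ U with hF'def
  have hF' : ∀ p, HasFDerivAt U (F' p) p := fun p => (hw.differentiable (lt_of_lt_of_le zero_lt_one h1le).ne' p).hasFDerivAt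
  have hFd : DifferentiableAt ℝ F' (t, x) :=
    ((hw.fderiv_right (m := ((⊤:ℕ∞):WithTop ℕ∞)) (by exact_mod_cast le_top)).differentiable (lt_of_lt_of_le zero_lt_one h1le).ne').differentiableAt
  set F'' := fderiv ℝ F' (t, x) with hF''def
  have hF'' : HasFDerivAt F' F'' (t, x) := hFd.hasFDerivAt
  have hA : pdt (pdx w) t x = (F'' (1, 0)) (0, 1) := by
    have hfun : (fun s => pdx w s x) = fun s => F' (s, x) (0, 1) := by
      funext s; exact gkn_pdx_eq_fderiv hw s x
    have hline : HasDerivAt (fun s : ℝ => (s, x)) ((1:ℝ), (0:ℝ)) t :=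
      (hasDerivAt_id t).prodMk (hasDerivAt_const t x)
    have hc : HasDerivAt (fun s : ℝ => F' (s, x)) (F'' (1, 0)) t :=
      hF''.comp_hasDerivAt t hline
    have hap : HasDerivAt (fun s : ℝ => F' (s, x) (0, 1)) ((F'' (1, 0)) (0, 1)) t :=
      ((ContinuousLinearMap.apply ℝ ℝ ((0:ℝ), (1:ℝ))).hasFDerivAt).comp_hasDerivAt t hc
    show deriv (fun s => pdx w s x) t = _
    rw [hfun]; exact hap.deriv
  have hB : pdx (pdt w) t x = (F'' (0, 1)) (1, 0) := by
    have hfun : (fun y => pdt w t y) = fun y => F' (t, y) (1, 0) := by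
      funext y; exact gkn_pdt_eq_fderiv hw t y
    have hline : HasDerivAt (fun y : ℝ => ((t:ℝ), y)) ((0:ℝ), (1:ℝ)) x :=
      (hasDerivAt_const x t).prodMk (hasDerivAt_id x)
    have hc : HasDerivAt (fun y : ℝ => F' (t, y)) (F'' (0, 1)) x :=
      hF''.comp_hasDerivAt x hline
    have hap : HasDerivAt (fun y : ℝ => F' (t, y) (1, 0)) ((F'' (0, 1)) (1, 0)) x :=
      ((ContinuousLinearMap.apply ℝ ℝ ((1:ℝ), (0:ℝ))).hasFDerivAt).comp_hasDerivAt x hc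
    show deriv (fun y => pdt w t y) x = _
    rw [hfun]; exact hap.deriv
  rw [hA, hB, second_derivative_symmetric hF' hF'' (1,0) (0,1)]

end Helpers

section Key

set_option maxHeartbeats 1600000

/-- The conservation-law identity `∂ₜT₁ = -∂ₓX₁` together with spatial
differentiability of the flux `X₁`. -/
lemma gkn_key (f : ℝ → ℝ) (hf : ContDiff ℝ (⊤ : ℕ∞) f)
    (u : ℝ → ℝ → ℝ) (hu : ContDiff ℝ (⊤ : ℕ∞) (Function.uncurry u))
    (hux : ∀ t x, pdx u t x ≠ 0) (hsol : isGKN f u) (t x : ℝ) :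
    pdt (T1 f u) t x = - pdx (X1 f u) t x ∧
      DifferentiableAt ℝ (fun y => X1 f u t y) x := by
  have h1le : (1:WithTop ℕ∞) ≤ ((⊤:ℕ∞):WithTop ℕ∞) := by exact_mod_cast le_top
  have h1 := gkn_contDiff_pdx hu
  have h2 := gkn_contDiff_pdx h1
  have h3 := gkn_contDiff_pdx h2
  have h4 := gkn_contDiff_pdx h3
  have hf1 : ContDiff ℝ (⊤ : ℕ∞) (deriv f) := by
    have := (contDiff_infty_iff_deriv.mp (by exact_mod_cast hf)).2
    exact_mod_cast this
  have hfd : ∀ z : ℝ, HasDerivAt f (deriv f z) z :=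
    fun z => ((hf.differentiable (lt_of_lt_of_le zero_lt_one h1le).ne') z).hasDerivAt
  have hfd2 : ∀ z : ℝ, HasDerivAt (deriv f) (deriv (deriv f) z) z :=
    fun z => ((hf1.differentiable (lt_of_lt_of_le zero_lt_one h1le).ne') z).hasDerivAt
  -- the formula for ∂ₜ (∂ₓ u) valid at any point
  have r1 : ∀ y : ℝ, pdt (pdx u) t y = (-(pdx (pdx u) t y) * f (u t y) + (3/2) * (pdx (pdx u) t y)^3
      - 3 * (pdx u t y * pdx (pdx u) t y * pdx (pdx (pdx u)) t y)
      + (pdx u t y)^2 * deriv f (u t y) + (pdx u t y)^2 * pdx (pdx (pdx (pdx u))) t y)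
      / (pdx u t y)^2 := by
    intro y
    have ne1 : pdx u t y ≠ 0 := hux t y
    have dd0 := gkn_hdx hu t y
    have dd1 := gkn_hdx h1 t y
    have dd2 := gkn_hdx h2 t y
    have dd3 := gkn_hdx h3 t y
    have Pf : HasDerivAt (fun z => f (u t z)) (deriv f (u t y) * pdx u t y) y :=
      (hfd (u t y)).comp y dd0
    rw [gkn_pdt_pdx_comm hu t y]
    have hfun : (fun z => pdt u t z) = (fun z => pdx (pdx (pdx u)) t z
        - (3/2) * (pdx (pdx u) t z)^2 / pdx u t z + f (u t z) / pdx u t z) :=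
      funext fun z => hsol t z
    have H : HasDerivAt (fun z => pdx (pdx (pdx u)) t z
        - (3/2) * (pdx (pdx u) t z)^2 / pdx u t z + f (u t z) / pdx u t z)
        ((-(pdx (pdx u) t y) * f (u t y) + (3/2) * (pdx (pdx u) t y)^3
          - 3 * (pdx u t y * pdx (pdx u) t y * pdx (pdx (pdx u)) t y)
          + (pdx u t y)^2 * deriv f (u t y) + (pdx u t y)^2 * pdx (pdx (pdx (pdx u))) t y)
          / (pdx u t y)^2) y := by
      have H0 := (dd3.sub (((dd2.pow 2).const_mul ((3:ℝ)/2)).div dd1 ne1)).add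
        (Pf.div dd1 ne1)
      exact gkn_hda_congr H0 (by simp only [Pi.pow_apply, Pi.neg_apply, Pi.mul_apply, Pi.add_apply, Pi.sub_apply]; field_simp; ring)
    show deriv (fun z => pdt u t z) y = _
    rw [hfun]
    exact H.deriv
  -- the formula for ∂ₜ (∂ₓ∂ₓ u) at (t, x)
  have ne1 : pdx u t x ≠ 0 := hux t x
  have dd0 := gkn_hdx hu t x
  have dd1 := gkn_hdx h1 t x
  have dd2 := gkn_hdx h2 t x
  have dd3 := gkn_hdx h3 t x
  have dd4 := gkn_hdx h4 t x
  have Pf : HasDerivAt (fun z => f (u t z)) (deriv f (u t x) * pdx u t x) x :=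
    (hfd (u t x)).comp x dd0
  have Pf1 : HasDerivAt (fun z => deriv f (u t z)) (deriv (deriv f) (u t x) * pdx u t x) x :=
    (hfd2 (u t x)).comp x dd0
  have r2 : pdt (pdx (pdx u)) t x = (2 * ((pdx (pdx u) t x)^2 * f (u t x))
      - 3 * (pdx (pdx u) t x)^4 - pdx u t x * (pdx (pdx (pdx u)) t x * f (u t x))
      + (15/2) * (pdx u t x * ((pdx (pdx u) t x)^2 * pdx (pdx (pdx u)) t x))
      - 3 * ((pdx u t x)^2 * (pdx (pdx (pdx u)) t x)^2)
      - (pdx u t x)^2 * (pdx (pdx u) t x * deriv f (u t x))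
      - 3 * ((pdx u t x)^2 * (pdx (pdx u) t x * pdx (pdx (pdx (pdx u))) t x))
      + (pdx u t x)^3 * pdx (pdx (pdx (pdx (pdx u)))) t x
      + (pdx u t x)^4 * deriv (deriv f) (u t x)) / (pdx u t x)^3 := by
    rw [gkn_pdt_pdx_comm h1 t x]
    have hfun : (fun y => pdt (pdx u) t y) = (fun y => (-(pdx (pdx u) t y) * f (u t y)
        + (3/2) * (pdx (pdx u) t y)^3
        - 3 * (pdx u t y * pdx (pdx u) t y * pdx (pdx (pdx u)) t y)
        + (pdx u t y)^2 * deriv f (u t y) + (pdx u t y)^2 * pdx (pdx (pdx (pdx u))) t y)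
        / (pdx u t y)^2) := funext fun y => r1 y
    have H : HasDerivAt (fun y => (-(pdx (pdx u) t y) * f (u t y)
        + (3/2) * (pdx (pdx u) t y)^3
        - 3 * (pdx u t y * pdx (pdx u) t y * pdx (pdx (pdx u)) t y)
        + (pdx u t y)^2 * deriv f (u t y) + (pdx u t y)^2 * pdx (pdx (pdx (pdx u))) t y)
        / (pdx u t y)^2)
        ((2 * ((pdx (pdx u) t x)^2 * f (u t x))
          - 3 * (pdx (pdx u) t x)^4 - pdx u t x * (pdx (pdx (pdx u)) t x * f (u t x))
          + (15/2) * (pdx u t x * ((pdx (pdx u) t x)^2 * pdx (pdx (pdx u)) t x))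
          - 3 * ((pdx u t x)^2 * (pdx (pdx (pdx u)) t x)^2)
          - (pdx u t x)^2 * (pdx (pdx u) t x * deriv f (u t x))
          - 3 * ((pdx u t x)^2 * (pdx (pdx u) t x * pdx (pdx (pdx (pdx u))) t x))
          + (pdx u t x)^3 * pdx (pdx (pdx (pdx (pdx u)))) t x
          + (pdx u t x)^4 * deriv (deriv f) (u t x)) / (pdx u t x)^3) x := by
      have Hnum := ((((dd2.neg.mul Pf).add ((dd2.pow 3).const_mul ((3:ℝ)/2))).sub
        (((dd1.mul dd2).mul dd3).const_mul (3:ℝ))).add ((dd1.pow 2).mul Pf1)).add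
        ((dd1.pow 2).mul dd4)
      have H0 := Hnum.div (dd1.pow 2) (pow_ne_zero 2 ne1)
      exact gkn_hda_congr H0 (by simp only [Pi.pow_apply, Pi.neg_apply, Pi.mul_apply, Pi.add_apply, Pi.sub_apply]; field_simp; ring)
    show deriv (fun y => pdt (pdx u) t y) x = _
    rw [hfun]
    exact H.deriv
  -- spatial derivative of the flux X₁
  have HX : HasDerivAt (fun y => X1 f u t y)
      (((-2/3) * (pdx (pdx u) t x) * (f (u t x))^2
        - 2 * ((pdx (pdx u) t x)^3 * f (u t x))
        + (9/2) * (pdx (pdx u) t x)^5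
        - pdx u t x * (pdx (pdx u) t x * (pdx (pdx (pdx u)) t x * f (u t x)))
        - (21/2) * (pdx u t x * ((pdx (pdx u) t x)^3 * pdx (pdx (pdx u)) t x))
        + (1/3) * ((pdx u t x)^2 * (f (u t x) * deriv f (u t x)))
        + (2/3) * ((pdx u t x)^2 * (pdx (pdx (pdx (pdx u))) t x * f (u t x)))
        + 3 * ((pdx u t x)^2 * (pdx (pdx u) t x * (pdx (pdx (pdx u)) t x)^2))
        + (5/2) * ((pdx u t x)^2 * ((pdx (pdx u) t x)^2 * deriv f (u t x)))
        + 4 * ((pdx u t x)^2 * ((pdx (pdx u) t x)^2 * pdx (pdx (pdx (pdx u))) t x))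
        - (1/3) * ((pdx u t x)^3 * (pdx (pdx (pdx u)) t x * deriv f (u t x)))
        - (pdx u t x)^3 * (pdx (pdx u) t x * pdx (pdx (pdx (pdx (pdx u)))) t x)
        - (pdx u t x)^4 * (pdx (pdx u) t x * deriv (deriv f) (u t x))) / (pdx u t x)^5) x := by
    have Ta := ((dd4.mul dd2).div (dd1.pow 2) (pow_ne_zero 2 ne1)).neg
    have Tb := ((dd3.pow 2).const_mul ((1:ℝ)/2)).div (dd1.pow 2) (pow_ne_zero 2 ne1)
    have Tc := ((dd3.const_mul ((2:ℝ)/3)).mul (((dd2.pow 2).const_mul (3:ℝ)).add Pf)).div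
      (dd1.pow 3) (pow_ne_zero 3 ne1)
    have Td := ((dd2.pow 4).const_mul ((9:ℝ)/8)).div (dd1.pow 4) (pow_ne_zero 4 ne1)
    have Te := (((dd2.pow 2).const_mul ((1:ℝ)/2)).mul Pf).div (dd1.pow 4) (pow_ne_zero 4 ne1)
    have Tf := (dd2.mul Pf1).div (dd1.pow 2) (pow_ne_zero 2 ne1)
    have Tg := ((Pf.pow 2).const_mul ((1:ℝ)/6)).div (dd1.pow 4) (pow_ne_zero 4 ne1)
    have H0 := (((((Ta.add Tb).add Tc).sub Td).add Te).sub Tf).add Tg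
    exact gkn_hda_congr H0 (by simp only [Pi.pow_apply, Pi.neg_apply, Pi.mul_apply, Pi.add_apply, Pi.sub_apply]; field_simp; ring)
  -- time derivative of the density T₁
  have e0 := gkn_hdt hu t x
  have e1 := gkn_hdt h1 t x
  have e2 := gkn_hdt h2 t x
  have Pft : HasDerivAt (fun s => f (u s x)) (deriv f (u t x) * pdt u t x) t :=
    (hfd (u t x)).comp t e0
  have HT : HasDerivAt (fun s => T1 f u s x)
      (-(((-2/3) * (pdx (pdx u) t x) * (f (u t x))^2
        - 2 * ((pdx (pdx u) t x)^3 * f (u t x))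
        + (9/2) * (pdx (pdx u) t x)^5
        - pdx u t x * (pdx (pdx u) t x * (pdx (pdx (pdx u)) t x * f (u t x)))
        - (21/2) * (pdx u t x * ((pdx (pdx u) t x)^3 * pdx (pdx (pdx u)) t x))
        + (1/3) * ((pdx u t x)^2 * (f (u t x) * deriv f (u t x)))
        + (2/3) * ((pdx u t x)^2 * (pdx (pdx (pdx (pdx u))) t x * f (u t x)))
        + 3 * ((pdx u t x)^2 * (pdx (pdx u) t x * (pdx (pdx (pdx u)) t x)^2))
        + (5/2) * ((pdx u t x)^2 * ((pdx (pdx u) t x)^2 * deriv f (u t x)))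
        + 4 * ((pdx u t x)^2 * ((pdx (pdx u) t x)^2 * pdx (pdx (pdx (pdx u))) t x))
        - (1/3) * ((pdx u t x)^3 * (pdx (pdx (pdx u)) t x * deriv f (u t x)))
        - (pdx u t x)^3 * (pdx (pdx u) t x * pdx (pdx (pdx (pdx (pdx u)))) t x)
        - (pdx u t x)^4 * (pdx (pdx u) t x * deriv (deriv f) (u t x))) / (pdx u t x)^5)) t := by
    have H0 := ((((e2.pow 2).const_mul ((1:ℝ)/2)).div (e1.pow 2) (pow_ne_zero 2 ne1)).add
      ((Pft.const_mul ((1:ℝ)/3)).div (e1.pow 2) (pow_ne_zero 2 ne1)))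
    rw [r2, r1 x, hsol t x] at H0
    exact gkn_hda_congr H0 (by simp only [Pi.pow_apply, Pi.neg_apply, Pi.mul_apply, Pi.add_apply, Pi.sub_apply]; field_simp; ring)
  refine ⟨?_, HX.differentiableAt⟩
  have eT : pdt (T1 f u) t x = _ := HT.deriv
  have eX : pdx (X1 f u) t x = _ := HX.deriv
  rw [eT, eX]

end Key

/-- Conservation of the Hamiltonian energy `E₁ = ∫ T₁ dx` for solutions of the
gKN equation with sufficient spatial decay. -/
theorem gKN_energy_constant (f : ℝ → ℝ) (hf : ContDiff ℝ (⊤ : ℕ∞) f)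
    (u : ℝ → ℝ → ℝ) (hu : ContDiff ℝ (⊤ : ℕ∞) (Function.uncurry u))
    (hux : ∀ t x, pdx u t x ≠ 0)
    (hsol : isGKN f u)
    (hTint : ∀ t : ℝ, Integrable (fun x => T1 f u t x))
    (hE : ∀ t : ℝ, HasDerivAt (fun s => ∫ x : ℝ, T1 f u s x) (∫ x : ℝ, pdt (T1 f u) t x) t)
    (hXint : ∀ t : ℝ, Integrable (fun x => pdx (X1 f u) t x))
    (hXtop : ∀ t : ℝ, Tendsto (fun x => X1 f u t x) atTop (nhds 0))
    (hXbot : ∀ t : ℝ, Tendsto (fun x => X1 f u t x) atBot (nhds 0)) :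
    ∀ t : ℝ, HasDerivAt (fun s => ∫ x : ℝ, T1 f u s x) 0 t := by
  intro t
  have key := fun x => gkn_key f hf u hu hux hsol t x
  have hXd : ∀ x : ℝ, HasDerivAt (fun y => X1 f u t y) (pdx (X1 f u) t x) x :=
    fun x => ((key x).2).hasDerivAt
  have hint0 : (∫ x : ℝ, pdx (X1 f u) t x) = 0 := by
    have h := integral_of_hasDerivAt_of_tendsto hXd (hXint t) (hXbot t) (hXtop t)
    simpa using h
  have hTzero : (∫ x : ℝ, pdt (T1 f u) t x) = 0 := by
    have hfun : (fun x => pdt (T1 f u) t x) = fun x => -(pdx (X1 f u) t x) :=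
      funext fun x => (key x).1
    rw [hfun, integral_neg, hint0, neg_zero]
  have h := hE t
  rwa [hTzero] at h
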